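/- If Y is drawn from the probability vector π and U ~ Uniform(0,1) independently, then the generalized inverse quantile conformity score E(Y,U;π) is uniformly distributed on [0,1]. -/

import Mathlib

open MeasureTheory Finset

noncomputable section

/-- Number of labels with strictly larger probability than `y`. -/
def nAbove {C : ℕ} (π : Fin C → ℝ) (y : Fin C) : ℕ :=
  (Finset.univ.filter (fun y' => π y < π y')).card

/-- The set of labels attaining the `c` largest probabilities
(well-defined as a set of size `min c C` when the entries of `π` are distinct). -/
def topSet {C : ℕ} (π : Fin C → ℝ) (c : ℕ) : Finset (Fin C) :=
  Finset.univ.filter (fun y => nAbove π y < c)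

/-- The `r`-th largest entry of `π` (0-indexed: `sortedDesc π 0 = π_(1)`),
and `0` if `r` is out of range. -/
def sortedDesc {C : ℕ} (π : Fin C → ℝ) (r : ℕ) : ℝ :=
  if h : r < C then π ((Tuple.sort π) (Fin.rev ⟨r, h⟩)) else 0

/-- Sum of the `c` largest entries of `π`: `π_(1) + ... + π_(c)`. -/
def topSum {C : ℕ} (π : Fin C → ℝ) (c : ℕ) : ℝ :=
  ∑ r ∈ Finset.range c, sortedDesc π r

/-- Generalized conditional quantile `L(π, τ) = min {c ∈ {1,...,C} : π_(1) + ... + π_(c) ≥ τ}`. -/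
def Lgen {C : ℕ} (π : Fin C → ℝ) (τ : ℝ) : ℕ :=
  sInf {c : ℕ | 1 ≤ c ∧ τ ≤ topSum π c}

/-- `V(π, τ) = (∑_{c=1}^{L(π,τ)} π_(c) − τ) / π_(L(π,τ))`. -/
def Vgen {C : ℕ} (π : Fin C → ℝ) (τ : ℝ) : ℝ :=
  (topSum π (Lgen π τ) - τ) / sortedDesc π (Lgen π τ - 1)

/-- The randomized oracle prediction set `S(u; π, τ)`: the top `L(π,τ) − 1` labels
if `u ≤ V(π,τ)`, and the top `L(π,τ)` labels otherwise. -/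
def Sgen {C : ℕ} (u : ℝ) (π : Fin C → ℝ) (τ : ℝ) : Finset (Fin C) :=
  if u ≤ Vgen π τ then topSet π (Lgen π τ - 1) else topSet π (Lgen π τ)

/-- The generalized inverse quantile conformity score
`E(y, u; π) = min {τ ∈ [0,1] : y ∈ S(u; π, τ)}`. -/
def Egen {C : ℕ} (y : Fin C) (u : ℝ) (π : Fin C → ℝ) : ℝ :=
  sInf {τ : ℝ | τ ∈ Set.Icc (0 : ℝ) 1 ∧ y ∈ Sgen u π τ}

section AuxScore

variable {C : ℕ} {π : Fin C → ℝ}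

lemma strictMono_sortComp (hinj : Function.Injective π) :
    StrictMono (π ∘ (Tuple.sort π)) :=
  (Tuple.monotone_sort π).strictMono_of_injective (hinj.comp (Equiv.injective _))

/-- The equiv sending rank `r` (0-indexed from the top) to the label of that rank. -/
def sortEquiv (π : Fin C → ℝ) : Fin C ≃ Fin C := (Fin.revPerm).trans (Tuple.sort π)

lemma sortEquiv_apply (r : Fin C) : sortEquiv π r = (Tuple.sort π) (Fin.rev r) := rfl

lemma nAbove_sortEquiv (hinj : Function.Injective π) (r : Fin C) :
    nAbove π (sortEquiv π r) = r := by
  have hs := strictMono_sortComp hinj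
  have himg : (univ.filter fun y' => π ((Tuple.sort π) (Fin.rev r)) < π y')
      = Finset.image (Tuple.sort π) (Finset.Ioi (Fin.rev r)) := by
    ext y
    simp only [mem_filter, mem_univ, true_and, Finset.mem_image, Finset.mem_Ioi]
    constructor
    · intro h
      refine ⟨(Tuple.sort π).symm y, ?_, by simp⟩
      have h2 : (π ∘ (Tuple.sort π)) (Fin.rev r)
          < (π ∘ (Tuple.sort π)) ((Tuple.sort π).symm y) := by simpa using h
      exact hs.lt_iff_lt.mp h2
    · rintro ⟨j, hj, rfl⟩
      exact hs.lt_iff_lt.mpr hj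
  rw [nAbove, sortEquiv_apply, himg,
    Finset.card_image_of_injective _ (Equiv.injective _), Fin.card_Ioi, Fin.val_rev]
  have := r.isLt
  omega

lemma nAbove_lt_C (y : Fin C) : nAbove π y < C := by
  have h : (univ.filter fun y' => π y < π y') ⊂ univ :=
    Finset.filter_ssubset.mpr ⟨y, mem_univ y, lt_irrefl _⟩
  simpa [nAbove] using Finset.card_lt_card h

lemma symm_sortEquiv (hinj : Function.Injective π) (y : Fin C) :
    (((sortEquiv π).symm y : Fin C) : ℕ) = nAbove π y := by
  have h := nAbove_sortEquiv hinj ((sortEquiv π).symm y)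
  rw [Equiv.apply_symm_apply] at h
  exact h.symm

lemma sortedDesc_eq (r : Fin C) : sortedDesc π (r : ℕ) = π (sortEquiv π r) := by
  rw [sortedDesc, dif_pos r.isLt, sortEquiv_apply]

lemma sortedDesc_nAbove (hinj : Function.Injective π) (y : Fin C) :
    sortedDesc π (nAbove π y) = π y := by
  rw [← symm_sortEquiv hinj y, sortedDesc_eq, Equiv.apply_symm_apply]

lemma sortedDesc_pos (hpos : ∀ y, 0 < π y) {r : ℕ} (h : r < C) : 0 < sortedDesc π r := by
  rw [sortedDesc, dif_pos h]; exact hpos _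

lemma sortedDesc_nonneg (hpos : ∀ y, 0 < π y) (r : ℕ) : 0 ≤ sortedDesc π r := by
  rw [sortedDesc]; split
  · exact (hpos _).le
  · exact le_refl 0

lemma topSum_zero : topSum π 0 = 0 := Finset.sum_range_zero _

lemma topSum_succ (c : ℕ) : topSum π (c + 1) = topSum π c + sortedDesc π c :=
  Finset.sum_range_succ _ _

lemma topSum_mono (hpos : ∀ y, 0 < π y) : Monotone (topSum π) :=
  monotone_nat_of_le_succ fun c => by
    rw [topSum_succ]; linarith [sortedDesc_nonneg hpos c]

lemma topSum_nonneg (hpos : ∀ y, 0 < π y) (c : ℕ) : 0 ≤ topSum π c := by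
  have := topSum_mono hpos (Nat.zero_le c)
  rwa [topSum_zero] at this

lemma topSum_C (hsum : ∑ y, π y = 1) : topSum π C = 1 := by
  rw [topSum, ← Fin.sum_univ_eq_sum_range (fun r => sortedDesc π r) C]
  calc ∑ r : Fin C, sortedDesc π (r : ℕ) = ∑ r : Fin C, π (sortEquiv π r) :=
        Finset.sum_congr rfl fun r _ => sortedDesc_eq r
    _ = ∑ y, π y := Equiv.sum_comp _ _
    _ = 1 := hsum

lemma topSum_le_one (hpos : ∀ y, 0 < π y) (hsum : ∑ y, π y = 1) {c : ℕ} (hc : c ≤ C) :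
    topSum π c ≤ 1 := by
  rw [← topSum_C hsum]; exact topSum_mono hpos hc

lemma mem_Sgen_iff (hpos : ∀ y, 0 < π y) (hsum : ∑ y, π y = 1)
    (hinj : Function.Injective π) (y : Fin C) {u τ' : ℝ}
    (hu0 : 0 ≤ u) (hu1 : u ≤ 1) (ht0 : 0 ≤ τ') (ht1 : τ' ≤ 1) :
    y ∈ Sgen u π τ' ↔ topSum π (nAbove π y) + (1 - u) * π y < τ' := by
  set a := nAbove π y with ha
  have haC : a < C := nAbove_lt_C y
  have hp : 0 < π y := hpos y
  have hpa : sortedDesc π a = π y := sortedDesc_nAbove hinj y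
  have hC1 : 1 ≤ C := by omega
  have hsC : topSum π C = 1 := topSum_C hsum
  have hmono := topSum_mono (π := π) hpos
  set L := Lgen π τ' with hLdef
  have hLmem : 1 ≤ L ∧ τ' ≤ topSum π L := by
    have hCmem : C ∈ {c : ℕ | 1 ≤ c ∧ τ' ≤ topSum π c} := ⟨hC1, by rw [hsC]; exact ht1⟩
    exact Nat.sInf_mem ⟨C, hCmem⟩
  have hLle : ∀ c, 1 ≤ c → τ' ≤ topSum π c → L ≤ c := fun c h1 h2 => Nat.sInf_le ⟨h1, h2⟩
  have hnneg : 0 ≤ (1 - u) * π y := mul_nonneg (by linarith) hp.le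
  have hs1 : topSum π (a + 1) = topSum π a + π y := by rw [topSum_succ a, hpa]
  rcases le_or_gt τ' (topSum π a) with hA | hB
  · constructor
    · intro hmem; exfalso
      rcases Nat.eq_zero_or_pos a with h0 | h1
      · have hτ0 : τ' = 0 := le_antisymm (by rw [h0, topSum_zero (π := π)] at hA; exact hA) ht0
        have hL1 : L = 1 := by
          refine le_antisymm (hLle 1 le_rfl ?_) hLmem.1
          rw [hτ0]
          exact topSum_nonneg hpos 1
        have hV : Vgen π τ' = 1 := by
          rw [Vgen, ← hLdef, hL1, hτ0]
          have h01 : topSum π 1 = sortedDesc π 0 := by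
            rw [topSum_succ 0, topSum_zero (π := π), zero_add]
          rw [h01, sub_zero]
          exact div_self (sortedDesc_pos hpos hC1).ne'
        rw [Sgen, ← hLdef, hV, if_pos hu1, hL1] at hmem
        simp [topSet] at hmem
      · have hLa : L ≤ a := hLle a h1 hA
        rw [Sgen, ← hLdef] at hmem
        split_ifs at hmem <;> simp only [topSet, mem_filter, mem_univ, true_and, ← ha] at hmem <;> omega
    · intro h; exfalso; linarith
  · rcases le_or_gt τ' (topSum π (a + 1)) with hB2 | hB3
    · have hL : L = a + 1 := by
        have hle : L ≤ a + 1 := hLle (a + 1) (Nat.succ_le_succ (Nat.zero_le a)) hB2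
        have hgt : a < L := by
          by_contra hcon
          push_neg at hcon
          have := hmono hcon
          linarith [hLmem.2]
        omega
      have hV : Vgen π τ' = (topSum π (a + 1) - τ') / π y := by
        rw [Vgen, ← hLdef, hL, Nat.add_sub_cancel, hpa]
      rw [Sgen, ← hLdef, hL, Nat.add_sub_cancel]
      by_cases hc : u ≤ Vgen π τ'
      · rw [if_pos hc]
        simp only [topSet, mem_filter, mem_univ, true_and, ← ha]
        constructor
        · intro h; exact absurd h (lt_irrefl a)
        · intro h; exfalso
          rw [hV] at hc
          have := (le_div_iff₀ hp).mp hc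
          nlinarith
      · rw [if_neg hc]
        simp only [topSet, mem_filter, mem_univ, true_and, ← ha]
        push_neg at hc
        rw [hV] at hc
        have hc2 := (div_lt_iff₀ hp).mp hc
        constructor
        · intro _; nlinarith
        · intro _; exact Nat.lt_succ_self a
    · have hgt : a + 1 < L := by
        by_contra hcon; push_neg at hcon
        have := hmono hcon
        linarith [hLmem.2]
      constructor
      · intro _
        have hle : (1 - u) * π y ≤ π y := by nlinarith
        linarith
      · intro _
        rw [Sgen, ← hLdef]
        split_ifs <;> simp only [topSet, mem_filter, mem_univ, true_and, ← ha] <;> omega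

lemma Egen_set_eq (hpos : ∀ y, 0 < π y) (hsum : ∑ y, π y = 1)
    (hinj : Function.Injective π) (y : Fin C) {u : ℝ} (hu0 : 0 ≤ u) (hu1 : u ≤ 1) :
    {τ' : ℝ | τ' ∈ Set.Icc (0 : ℝ) 1 ∧ y ∈ Sgen u π τ'}
      = Set.Ioc (topSum π (nAbove π y) + (1 - u) * π y) 1 := by
  have he0 : 0 ≤ topSum π (nAbove π y) + (1 - u) * π y :=
    add_nonneg (topSum_nonneg hpos _) (mul_nonneg (by linarith) (hpos y).le)
  ext τ'
  simp only [Set.mem_setOf_eq, Set.mem_Icc, Set.mem_Ioc]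
  constructor
  · rintro ⟨⟨h0, h1⟩, hm⟩
    exact ⟨(mem_Sgen_iff hpos hsum hinj y hu0 hu1 h0 h1).mp hm, h1⟩
  · rintro ⟨h0, h1⟩
    have ht0 : 0 ≤ τ' := le_trans he0 h0.le
    exact ⟨⟨ht0, h1⟩, (mem_Sgen_iff hpos hsum hinj y hu0 hu1 ht0 h1).mpr h0⟩

lemma Egen_eq_of_lt_one (hpos : ∀ y, 0 < π y) (hsum : ∑ y, π y = 1)
    (hinj : Function.Injective π) (y : Fin C) {u : ℝ} (hu0 : 0 ≤ u) (hu1 : u ≤ 1)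
    (he : topSum π (nAbove π y) + (1 - u) * π y < 1) :
    Egen y u π = topSum π (nAbove π y) + (1 - u) * π y := by
  rw [Egen, Egen_set_eq hpos hsum hinj y hu0 hu1]
  exact csInf_Ioc he

lemma Egen_eq_zero (hpos : ∀ y, 0 < π y) (hsum : ∑ y, π y = 1)
    (hinj : Function.Injective π) (y : Fin C) {u : ℝ} (hu0 : 0 ≤ u) (hu1 : u ≤ 1)
    (he : topSum π (nAbove π y) + (1 - u) * π y = 1) :
    Egen y u π = 0 := by
  rw [Egen, Egen_set_eq hpos hsum hinj y hu0 hu1, he, Set.Ioc_self, Real.sInf_empty]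

lemma Egen_E_le_one (hpos : ∀ y, 0 < π y) (hsum : ∑ y, π y = 1)
    (hinj : Function.Injective π) (y : Fin C) {u : ℝ} (hu0 : 0 ≤ u) :
    topSum π (nAbove π y) + (1 - u) * π y ≤ 1 := by
  have h1 : topSum π (nAbove π y + 1) = topSum π (nAbove π y) + π y := by
    rw [topSum_succ, sortedDesc_nAbove hinj]
  have h2 : topSum π (nAbove π y + 1) ≤ 1 := topSum_le_one hpos hsum (nAbove_lt_C y)
  nlinarith [(hpos y).le]

lemma sum_max_min (hpos : ∀ y, 0 < π y) (hsum : ∑ y, π y = 1)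
    (hinj : Function.Injective π) {τ : ℝ} (hτ0 : 0 ≤ τ) (hτ1 : τ ≤ 1) :
    ∑ y, max (min (τ - topSum π (nAbove π y)) (π y)) 0 = τ := by
  have hstep : ∀ y : Fin C, max (min (τ - topSum π (nAbove π y)) (π y)) 0
      = max (min (τ - topSum π (nAbove π y)) (sortedDesc π (nAbove π y))) 0 := by
    intro y; rw [sortedDesc_nAbove hinj]
  calc ∑ y, max (min (τ - topSum π (nAbove π y)) (π y)) 0
      = ∑ y, max (min (τ - topSum π (nAbove π y)) (sortedDesc π (nAbove π y))) 0 :=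
        Finset.sum_congr rfl fun y _ => hstep y
    _ = ∑ r : Fin C, max (min (τ - topSum π (nAbove π (sortEquiv π r)))
          (sortedDesc π (nAbove π (sortEquiv π r)))) 0 :=
        (Equiv.sum_comp (sortEquiv π)
          (fun y => max (min (τ - topSum π (nAbove π y)) (sortedDesc π (nAbove π y))) 0)).symm
    _ = ∑ r : Fin C, max (min (τ - topSum π (r : ℕ)) (sortedDesc π (r : ℕ))) 0 := by
        refine Finset.sum_congr rfl fun r _ => ?_
        rw [nAbove_sortEquiv hinj r]
    _ = ∑ r ∈ Finset.range C, max (min (τ - topSum π r) (sortedDesc π r)) 0 :=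
        Fin.sum_univ_eq_sum_range (fun r => max (min (τ - topSum π r) (sortedDesc π r)) 0) C
    _ = ∑ r ∈ Finset.range C, (min τ (topSum π (r + 1)) - min τ (topSum π r)) := by
        refine Finset.sum_congr rfl fun r _ => ?_
        have hq : 0 ≤ sortedDesc π r := sortedDesc_nonneg hpos r
        have hs : topSum π (r + 1) = topSum π r + sortedDesc π r := topSum_succ r
        simp only [min_def, max_def]
        split_ifs <;> linarith
    _ = min τ (topSum π C) - min τ (topSum π 0) :=
        Finset.sum_range_sub (fun r => min τ (topSum π r)) C
    _ = τ := by
        rw [topSum_C hsum, topSum_zero (π := π), min_eq_left hτ1, min_eq_right hτ0, sub_zero]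
/-- Threshold for `u`. -/
def tlow {C : ℕ} (π : Fin C → ℝ) (τ : ℝ) (y : Fin C) : ℝ :=
  1 - (τ - topSum π (nAbove π y)) / π y

lemma tlow_le_iff (hpos : ∀ y, 0 < π y) (τ : ℝ) (y : Fin C) (u : ℝ) :
    tlow π τ y ≤ u ↔ topSum π (nAbove π y) + (1 - u) * π y ≤ τ := by
  rw [tlow]
  constructor
  · intro h
    have h2 : 1 - u ≤ (τ - topSum π (nAbove π y)) / π y := by linarith
    have h3 := (le_div_iff₀ (hpos y)).mp h2
    linarith
  · intro h
    have h2 : (1 - u) * π y ≤ τ - topSum π (nAbove π y) := by linarith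
    have h3 := (le_div_iff₀ (hpos y)).mpr h2
    linarith

lemma eq_tlow_iff (hpos : ∀ y, 0 < π y) (τ : ℝ) (y : Fin C) (u : ℝ) :
    u = tlow π τ y ↔ topSum π (nAbove π y) + (1 - u) * π y = τ := by
  have h1 : (u = tlow π τ y) ↔ (1 - u = (τ - topSum π (nAbove π y)) / π y) := by
    rw [tlow]; constructor <;> intro h <;> linarith
  rw [h1, eq_div_iff (hpos y).ne']
  constructor <;> intro h <;> linarith

lemma prod_one_sub_max (hpos : ∀ y, 0 < π y) (τ : ℝ) (y : Fin C) :
    π y * (1 - max (tlow π τ y) 0) = min (τ - topSum π (nAbove π y)) (π y) := by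
  have hp := hpos y
  rcases le_total (tlow π τ y) 0 with h | h
  · have h2 : (1:ℝ) ≤ (τ - topSum π (nAbove π y)) / π y := by rw [tlow] at h; linarith
    have h3 := (le_div_iff₀ hp).mp h2
    rw [max_eq_right h, min_eq_right (by linarith)]
    ring
  · have h2 : (τ - topSum π (nAbove π y)) / π y ≤ 1 := by rw [tlow] at h; linarith
    have h3 := (div_le_iff₀ hp).mp h2
    rw [max_eq_left h, min_eq_left (by linarith), tlow]
    have h4 : 1 - (1 - (τ - topSum π (nAbove π y)) / π y) = (τ - topSum π (nAbove π y)) / π y := by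
      ring
    rw [h4, mul_comm, div_mul_cancel₀ _ hp.ne']

lemma ofReal_eq_ofReal_max (x : ℝ) : ENNReal.ofReal x = ENNReal.ofReal (max x 0) := by
  rcases le_total x 0 with h | h
  · rw [max_eq_right h, ENNReal.ofReal_of_nonpos h, ENNReal.ofReal_zero]
  · rw [max_eq_left h]


end AuxScore

/-- If `Y ~ π` and `U ~ Uniform(0,1)` independently, the generalized inverse
quantile conformity score `E(Y, U; π)` is uniformly distributed on `[0, 1]`:
`P[E(Y,U;π) ≤ τ] = τ` for all `τ ∈ [0, 1]`. -/
theorem score_uniformly_distributed {C : ℕ} (π : Fin C → ℝ)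
    (hpos : ∀ y, 0 < π y) (hsum : ∑ y, π y = 1) (hinj : Function.Injective π)
    (μ : Measure (Fin C)) (hμ : ∀ y, μ {y} = ENNReal.ofReal (π y))
    (τ : ℝ) (hτ : τ ∈ Set.Icc (0 : ℝ) 1) :
    (μ.prod (volume.restrict (Set.Icc (0 : ℝ) 1)))
        {p : Fin C × ℝ | Egen p.1 p.2 π ≤ τ} = ENNReal.ofReal τ := by
  obtain ⟨hτ0, hτ1⟩ := hτ
  set ν := volume.restrict (Set.Icc (0 : ℝ) 1) with hνdef
  set A1 : Fin C → Set ℝ := fun y => (Set.Ici (tlow π τ y) \ {tlow π 1 y}) ∩ Set.Icc 0 1 with hA1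
  set A2 : Fin C → Set ℝ := fun y =>
    Set.Ici (tlow π τ y) ∪ {tlow π 1 y} ∪ (Set.Icc (0:ℝ) 1)ᶜ with hA2
  -- inclusions
  have hsub1 : (⋃ y, ({y} : Set (Fin C)) ×ˢ A1 y) ⊆ {p : Fin C × ℝ | Egen p.1 p.2 π ≤ τ} := by
    rintro ⟨y, u⟩ hmem
    simp only [Set.mem_iUnion, Set.mem_prod, Set.mem_singleton_iff] at hmem
    obtain ⟨y', hy', hu⟩ := hmem
    subst hy'
    simp only [hA1, Set.mem_inter_iff, Set.mem_diff, Set.mem_Ici, Set.mem_singleton_iff,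
      Set.mem_Icc] at hu
    obtain ⟨⟨hti, hne⟩, hu0, hu1⟩ := hu
    have hEle : topSum π (nAbove π y) + (1 - u) * π y ≤ τ := (tlow_le_iff hpos τ y u).mp hti
    have hEne : topSum π (nAbove π y) + (1 - u) * π y ≠ 1 :=
      fun h => hne ((eq_tlow_iff hpos 1 y u).mpr h)
    have hElt : topSum π (nAbove π y) + (1 - u) * π y < 1 :=
      lt_of_le_of_ne (Egen_E_le_one hpos hsum hinj y hu0) hEne
    have := Egen_eq_of_lt_one hpos hsum hinj y hu0 hu1 hElt
    simp only [Set.mem_setOf_eq]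
    rw [this]
    exact hEle
  have hsub2 : {p : Fin C × ℝ | Egen p.1 p.2 π ≤ τ} ⊆ ⋃ y, ({y} : Set (Fin C)) ×ˢ A2 y := by
    rintro ⟨y, u⟩ h
    simp only [Set.mem_setOf_eq] at h
    refine Set.mem_iUnion.mpr ⟨y, ⟨rfl, ?_⟩⟩
    simp only [hA2, Set.mem_union, Set.mem_Ici, Set.mem_singleton_iff, Set.mem_compl_iff,
      Set.mem_Icc]
    by_cases hu : 0 ≤ u ∧ u ≤ 1
    · obtain ⟨hu0, hu1⟩ := hu
      by_cases hE : topSum π (nAbove π y) + (1 - u) * π y = 1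
      · exact Or.inl (Or.inr ((eq_tlow_iff hpos 1 y u).mpr hE))
      · have hElt : topSum π (nAbove π y) + (1 - u) * π y < 1 :=
          lt_of_le_of_ne (Egen_E_le_one hpos hsum hinj y hu0) hE
        have hEq := Egen_eq_of_lt_one hpos hsum hinj y hu0 hu1 hElt
        rw [hEq] at h
        exact Or.inl (Or.inl ((tlow_le_iff hpos τ y u).mpr h))
    · exact Or.inr hu
  -- measures of sections
  have hIcc : ∀ y, Set.Ici (tlow π τ y) ∩ Set.Icc (0:ℝ) 1 = Set.Icc (max (tlow π τ y) 0) 1 := by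
    intro y; ext u
    simp only [Set.mem_inter_iff, Set.mem_Ici, Set.mem_Icc, max_le_iff]
    tauto
  have hw0 : ∀ y, volume (({tlow π 1 y} : Set ℝ) ∩ Set.Icc 0 1) = 0 :=
    fun y => le_antisymm
      ((measure_mono Set.inter_subset_left).trans_eq Real.volume_singleton) zero_le
  have hν1 : ∀ y, ν (A1 y) = ENNReal.ofReal (1 - max (tlow π τ y) 0) := by
    intro y
    rw [hνdef, Measure.restrict_apply' measurableSet_Icc]
    have hset : A1 y ∩ Set.Icc 0 1 = Set.Icc (max (tlow π τ y) 0) 1 \ {tlow π 1 y} := by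
      rw [hA1, ← hIcc y]; ext u
      simp only [Set.mem_inter_iff, Set.mem_diff, Set.mem_Ici, Set.mem_singleton_iff,
        Set.mem_Icc]
      tauto
    rw [hset, measure_diff_null Real.volume_singleton, Real.volume_Icc]
  have hν2 : ∀ y, ν (A2 y) = ENNReal.ofReal (1 - max (tlow π τ y) 0) := by
    intro y
    rw [hνdef, Measure.restrict_apply' measurableSet_Icc]
    have hset : A2 y ∩ Set.Icc 0 1
        = Set.Icc (max (tlow π τ y) 0) 1 ∪ (({tlow π 1 y} : Set ℝ) ∩ Set.Icc 0 1) := by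
      rw [hA2, ← hIcc y]; ext u
      simp only [Set.mem_inter_iff, Set.mem_union, Set.mem_Ici, Set.mem_singleton_iff,
        Set.mem_compl_iff, Set.mem_Icc]
      tauto
    rw [hset]
    have huni : volume (Set.Icc (max (tlow π τ y) 0) 1 ∪ (({tlow π 1 y} : Set ℝ) ∩ Set.Icc 0 1))
        = volume (Set.Icc (max (tlow π τ y) 0) 1) :=
      le_antisymm ((measure_union_le _ _).trans (by rw [hw0 y, add_zero]))
        (measure_mono Set.subset_union_left)
    rw [huni, Real.volume_Icc]
  -- disjointness
  have hdisj : ∀ B : Fin C → Set ℝ,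
      Pairwise (Function.onFun Disjoint fun y => ({y} : Set (Fin C)) ×ˢ B y) := by
    intro B i j hij
    refine Set.disjoint_left.mpr ?_
    rintro ⟨y, u⟩ h1 h2
    rw [Set.mem_prod, Set.mem_singleton_iff] at h1 h2
    exact hij (h1.1.symm.trans h2.1)
  have hmeas : ∀ (B : Fin C → Set ℝ), (∀ y, MeasurableSet (B y)) →
      (∀ y, ν (B y) = ENNReal.ofReal (1 - max (tlow π τ y) 0)) →
      (μ.prod ν) (⋃ y, ({y} : Set (Fin C)) ×ˢ B y)
        = ∑ y, ENNReal.ofReal (π y) * ENNReal.ofReal (1 - max (tlow π τ y) 0) := by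
    intro B hB hνB
    rw [measure_iUnion (hdisj B) (fun y => (measurableSet_singleton y).prod (hB y)),
      tsum_fintype]
    exact Finset.sum_congr rfl fun y _ => by rw [Measure.prod_prod, hμ y, hνB y]
  have hm1 : ∀ y, MeasurableSet (A1 y) := fun y =>
    ((measurableSet_Ici.diff (measurableSet_singleton _)).inter measurableSet_Icc)
  have hm2 : ∀ y, MeasurableSet (A2 y) := fun y =>
    ((measurableSet_Ici.union (measurableSet_singleton _)).union measurableSet_Icc.compl)
  have hmain : (μ.prod ν) {p : Fin C × ℝ | Egen p.1 p.2 π ≤ τ}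
      = ∑ y, ENNReal.ofReal (π y) * ENNReal.ofReal (1 - max (tlow π τ y) 0) :=
    le_antisymm ((measure_mono hsub2).trans (le_of_eq (hmeas A2 hm2 hν2)))
      ((le_of_eq (hmeas A1 hm1 hν1).symm).trans (measure_mono hsub1))
  rw [hmain]
  calc ∑ y, ENNReal.ofReal (π y) * ENNReal.ofReal (1 - max (tlow π τ y) 0)
      = ∑ y, ENNReal.ofReal (π y * (1 - max (tlow π τ y) 0)) :=
        Finset.sum_congr rfl fun y _ => (ENNReal.ofReal_mul (hpos y).le).symm
    _ = ∑ y, ENNReal.ofReal (max (min (τ - topSum π (nAbove π y)) (π y)) 0) :=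
        Finset.sum_congr rfl fun y _ => by
          rw [prod_one_sub_max hpos τ y, ofReal_eq_ofReal_max]
    _ = ENNReal.ofReal (∑ y, max (min (τ - topSum π (nAbove π y)) (π y)) 0) :=
        (ENNReal.ofReal_sum_of_nonneg fun y _ => le_max_right _ _).symm
    _ = ENNReal.ofReal τ := by rw [sum_max_min hpos hsum hinj hτ0 hτ1]
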